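/- Restriction inequality for the Lovász extension: let f be a nonnegative monotone submodular set function on subsets of a finite set L, let C ⊆ L, and let y, y' ∈ [0,1]^L satisfy y_u ≤ y'_u for all u ∈ L and {u ∈ L : y_u < y'_u} ⊆ C. Then f̂(y') − f̂(y) ≤ f̂(y'|_C) − f̂(y|_C), where for w ∈ [0,1]^L the restriction w|_C is defined by (w|_C)_u = w_u for u ∈ C and (w|_C)_u = 0 for u ∉ C. -/

import Mathlib

open Finset

/-- The Lovász extension of a set function `f` on subsets of a finite type `L`:
`f̂(y) = ∫₀¹ f({u : y u ≥ t}) dt`. -/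
noncomputable def lovasz {L : Type*} [Fintype L] (f : Finset L → ℝ) (y : L → ℝ) : ℝ :=
  ∫ t in (0:ℝ)..1, f (Finset.univ.filter fun u => t ≤ y u)

/-- The restriction `w|_C` of `w` to `C`: equal to `w` on `C` and `0` outside. -/
def restrict {L : Type*} [DecidableEq L] (w : L → ℝ) (C : Finset L) : L → ℝ :=
  fun u => if u ∈ C then w u else 0

/-- Restriction inequality for the Lovász extension: if `y ≤ y'` coordinatewise and all
coordinates where they differ lie in `C`, then
`f̂(y') - f̂(y) ≤ f̂(y'|_C) - f̂(y|_C)`. -/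
theorem stmt11 {L : Type*} [Fintype L] [DecidableEq L] (f : Finset L → ℝ)
    (hf_nonneg : ∀ S : Finset L, 0 ≤ f S)
    (hf_mono : ∀ A B : Finset L, A ⊆ B → f A ≤ f B)
    (hf_submod : ∀ A B : Finset L, f (A ∪ B) + f (A ∩ B) ≤ f A + f B)
    (C : Finset L) (y y' : L → ℝ)
    (hy : ∀ u, y u ∈ Set.Icc (0:ℝ) 1) (hy' : ∀ u, y' u ∈ Set.Icc (0:ℝ) 1)
    (hle : ∀ u, y u ≤ y' u)
    (hdiff : ∀ u, y u < y' u → u ∈ C) :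
    lovasz f y' - lovasz f y ≤ lovasz f (restrict y' C) - lovasz f (restrict y C) := by
  have key : ∀ z : L → ℝ, Antitone (fun t => f (Finset.univ.filter fun u => t ≤ z u)) := by
    intro z s t hst
    apply hf_mono
    intro u hu
    simp only [mem_filter, mem_univ, true_and] at *
    exact hst.trans hu
  have int : ∀ z : L → ℝ,
      IntervalIntegrable (fun t => f (Finset.univ.filter fun u => t ≤ z u))
        MeasureTheory.volume 0 1 := fun z => (key z).intervalIntegrable
  rw [sub_le_sub_iff]
  unfold lovasz
  rw [← intervalIntegral.integral_add (int y') (int (restrict y C)),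
      ← intervalIntegral.integral_add (int (restrict y' C)) (int y)]
  apply intervalIntegral.integral_mono_on (by norm_num)
    ((int y').add (int (restrict y C))) ((int (restrict y' C)).add (int y))
  intro t ht
  rcases eq_or_lt_of_le ht.1 with h0 | h0
  · -- t = 0 : all filters are `univ`
    have huniv : ∀ z : L → ℝ, (∀ u, 0 ≤ z u) →
        (Finset.univ.filter fun u => t ≤ z u) = Finset.univ := by
      intro z hz
      apply Finset.filter_true_of_mem
      intro u _
      rw [← h0]; exact hz u
    rw [huniv y fun u => (hy u).1, huniv y' fun u => (hy' u).1,
        huniv (restrict y C) (fun u => by unfold _root_.restrict; split <;> [exact (hy u).1; rfl]),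
        huniv (restrict y' C) (fun u => by unfold _root_.restrict; split <;> [exact (hy' u).1; rfl])]
  · -- t > 0
    have hR : ∀ z : L → ℝ, (Finset.univ.filter fun u => t ≤ restrict z C u)
        = (Finset.univ.filter fun u => t ≤ z u) ∩ C := by
      intro z
      ext u
      simp only [mem_filter, mem_inter, mem_univ, true_and]
      simp only [_root_.restrict]
      by_cases hu : u ∈ C
      · simp [hu]
      · simp [hu, not_le.mpr h0]
    rw [hR y, hR y']
    set A := Finset.univ.filter fun u => t ≤ y u with hA
    set B := Finset.univ.filter fun u => t ≤ y' u with hB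
    have hAB : A ⊆ B := by
      intro u hu
      simp only [hA, hB, mem_filter, mem_univ, true_and] at *
      exact hu.trans (hle u)
    have hU : A ∪ (B ∩ C) = B := by
      apply Finset.Subset.antisymm
      · exact Finset.union_subset hAB (Finset.inter_subset_left)
      · intro u hu
        by_cases huA : u ∈ A
        · exact Finset.mem_union_left _ huA
        · apply Finset.mem_union_right
          refine Finset.mem_inter.mpr ⟨hu, hdiff u ?_⟩
          simp only [hA, hB, mem_filter, mem_univ, true_and, not_le] at *
          exact lt_of_lt_of_le huA hu
    have hI : A ∩ (B ∩ C) = A ∩ C := by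
      rw [← Finset.inter_assoc, Finset.inter_eq_left.mpr hAB]
    have := hf_submod A (B ∩ C)
    rw [hU, hI] at this
    linarith
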